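/- Let B = {(F̄, H̄) ∈ ℂ² : F̄·(F̄ − H̄(H̄ + 1)) = 0} and define Ψ : ℂ² \ B → ℂ² by Ψ(F̄, H̄) = ((H̄ + 1)·F̄ / (F̄ − H̄(H̄ + 1))², (F̄ − H̄²)·(F̄ − H̄(H̄ + 1))² / F̄²). Then for every (F̄, H̄) ∈ ℂ² \ B one has (f, h)(Ψ(F̄, H̄)) = (F̄, H̄), where (f, h) : ℂ² → ℂ² is the map given by the Pinchuk polynomials f = (xt+1)²(t²+y) and h = t(xt+1) with t = xy − 1. -/

import Mathlib

noncomputable section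

/-- The complex Pinchuk auxiliary polynomial `t = xy - 1`. -/
def cT (x y : ℂ) : ℂ := x * y - 1

/-- The complex Pinchuk auxiliary polynomial `h = t(xt + 1)`. -/
def cH (x y : ℂ) : ℂ := cT x y * (x * cT x y + 1)

/-- The complex Pinchuk auxiliary polynomial `f = (xt+1)^2 (t^2 + y)`. -/
def cF (x y : ℂ) : ℂ := (x * cT x y + 1) ^ 2 * ((cT x y) ^ 2 + y)

/-- The complex Pinchuk polynomial `u(f,h)`. -/
def cU (f h : ℂ) : ℂ :=
  (1/4) * f * (75*f^3 + 300*f^2*h + 450*f*h^2 + 276*f^2 + 828*f*h + 48*h^2 + 364*f + 48*h)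

/-- The complexification `ℂF : ℂ² → ℂ²` of Pinchuk's map, given by the same
    polynomials `p = f + h` and `q = -t² - 6th(h+1) + u(f,h)`. -/
def cPinchuk : ℂ × ℂ → ℂ × ℂ := fun v =>
  (cF v.1 v.2 + cH v.1 v.2,
   -(cT v.1 v.2)^2 - 6 * cT v.1 v.2 * cH v.1 v.2 * (cH v.1 v.2 + 1)
     + cU (cF v.1 v.2) (cH v.1 v.2))

/-- A continuous map `g : X → Y` is *not proper at* `y ∈ Y` if there is no
    neighborhood `U` of `y` such that `g ⁻¹(cl U)` is compact. -/
def NotProperAt {X Y : Type*} [TopologicalSpace X] [TopologicalSpace Y]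
    (g : X → Y) (y : Y) : Prop :=
  ¬ ∃ U ∈ nhds y, IsCompact (g ⁻¹' closure U)

/-- The map `(f, h) : ℂ² → ℂ²`. -/
def cfh : ℂ × ℂ → ℂ × ℂ := fun v => (cF v.1 v.2, cH v.1 v.2)

/-- The map `Ψ` defined on `ℂ² \ B`, where `B = {F̄(F̄ - H̄(H̄+1)) = 0}`, given by
    `Ψ(F̄, H̄) = ((H̄+1)F̄/(F̄ - H̄(H̄+1))², (F̄ - H̄²)(F̄ - H̄(H̄+1))²/F̄²)`. -/
def Psi (F H : ℂ) : ℂ × ℂ :=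
  ((H + 1) * F / (F - H * (H + 1))^2, (F - H^2) * (F - H * (H + 1))^2 / F^2)

/-- `Ψ` is a right inverse of `(f, h)` on `ℂ² \ B`:
    for every `(F̄, H̄) ∉ B` one has `(f, h)(Ψ(F̄, H̄)) = (F̄, H̄)`. -/
theorem pinchuk_fh_section :
    ∀ F H : ℂ, F * (F - H * (H + 1)) ≠ 0 → cfh (Psi F H) = (F, H) := by
  intro F H hFD
  have hF : F ≠ 0 := left_ne_zero_of_mul hFD
  have hD : F - H * (H + 1) ≠ 0 := right_ne_zero_of_mul hFD
  set D := F - H * (H + 1) with hDdef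
  set x : ℂ := (H + 1) * F / D ^ 2 with hx
  set y : ℂ := (F - H ^ 2) * D ^ 2 / F ^ 2 with hy
  have hD' : F - H * (H + 1) ≠ 0 := hD
  have ht : cT x y = H * D / F := by
    rw [cT, hx, hy, hDdef]; field_simp; ring
  have hxt : x * cT x y + 1 = F / D := by
    rw [ht, hx, hDdef]; field_simp; ring
  have hH : cH x y = H := by
    rw [cH, hxt, ht]; field_simp
  have hFv : cF x y = F := by
    rw [cF, hxt, ht, hy, hDdef]; field_simp; ring
  simp only [cfh, Psi, ← hDdef, ← hx, ← hy, hH, hFv]
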